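/- Monotonicity of departures in arrivals: if A ≤ A' pointwise (two arrival processes ℤ → ℕ) then the cumulative departures satisfy ∑_{r=m}^{n} D(A,S)(r) ≤ ∑_{r=m}^{n} D(A',S)(r) for queues started empty (A, A' vanishing before some common time), for any fixed service process S and any m ≤ n. -/

import Mathlib

/-- Queue length at time `n` for arrivals `A` and services `S`. -/
noncomputable def qX (A S : ℤ → ℕ) (n : ℤ) : ℕ∞ :=
  ⨆ (m : ℤ) (_ : m ≤ n), ((∑ r ∈ Finset.Ico m n, ((A r : ℤ) - (S r : ℤ))).toNat : ℕ∞)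

/-- Departures at time `n`: `min(X(n) + A(n), S(n))`, with `min(∞, s) = s`. -/
noncomputable def qD (A S : ℤ → ℕ) (n : ℤ) : ℕ :=
  (min (qX A S n + (A n : ℕ∞)) ((S n : ℕ∞))).toNat

lemma sum_Ico_succ_top' {M : Type*} [AddCommMonoid M] {m n : ℤ} (h : m ≤ n) (f : ℤ → M) :
    ∑ r ∈ Finset.Ico m (n+1), f r = (∑ r ∈ Finset.Ico m n, f r) + f n := by
  have : Finset.Ico m (n+1) = Finset.Icc m n := by
    ext x; simp only [Finset.mem_Ico, Finset.mem_Icc]; omega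
  rw [this, ← Finset.Ico_insert_right h, Finset.sum_insert (by simp), add_comm]

lemma sum_Ico_split' {M : Type*} [AddCommMonoid M] {a b c : ℤ} (hab : a ≤ b) (hbc : b ≤ c)
    (f : ℤ → M) :
    ∑ r ∈ Finset.Ico a c, f r = (∑ r ∈ Finset.Ico a b, f r) + ∑ r ∈ Finset.Ico b c, f r := by
  rw [← Finset.Ico_union_Ico_eq_Ico hab hbc,
    Finset.sum_union (Finset.Ico_disjoint_Ico_consecutive a b c)]

/-- finite-window version of the queue length -/
noncomputable def qg (A S : ℤ → ℕ) (t₀ n : ℤ) : ℕ :=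
  (Finset.Icc t₀ n).sup fun m => (∑ r ∈ Finset.Ico m n, ((A r : ℤ) - (S r : ℤ))).toNat

lemma qg_def (A S : ℤ → ℕ) (t₀ n : ℤ) :
    qg A S t₀ n = (Finset.Icc t₀ n).sup
      (fun m => (∑ r ∈ Finset.Ico m n, ((A r : ℤ) - (S r : ℤ))).toNat) := rfl

lemma qg_t0 (A S : ℤ → ℕ) (t₀ : ℤ) : qg A S t₀ t₀ = 0 := by
  simp [qg]

lemma qg_succ (A S : ℤ → ℕ) (t₀ n : ℤ) (hn : t₀ ≤ n) :
    qg A S t₀ (n+1) = (qg A S t₀ n + A n) - S n := by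
  apply le_antisymm
  · rw [qg_def]
    apply Finset.sup_le
    intro m hm
    simp only [Finset.mem_Icc] at hm
    rcases eq_or_lt_of_le hm.2 with h | h
    · simp [h]
    · have hmn : m ≤ n := by omega
      rw [sum_Ico_succ_top' hmn]
      have h1 : (∑ r ∈ Finset.Ico m n, ((A r : ℤ) - (S r : ℤ))) ≤ ((qg A S t₀ n : ℤ)) := by
        have h2 : (∑ r ∈ Finset.Ico m n, ((A r : ℤ) - (S r : ℤ))).toNat ≤ qg A S t₀ n := by
          rw [qg_def]
          exact Finset.le_sup (f := fun m => (∑ r ∈ Finset.Ico m n, ((A r : ℤ) - (S r : ℤ))).toNat) (Finset.mem_Icc.mpr ⟨hm.1, hmn⟩)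
        omega
      omega
  · have hne : (Finset.Icc t₀ n).Nonempty := Finset.nonempty_Icc.mpr hn
    obtain ⟨m', hm', hsup⟩ := Finset.exists_mem_eq_sup _ hne
      (fun m => (∑ r ∈ Finset.Ico m n, ((A r : ℤ) - (S r : ℤ))).toNat)
    simp only [Finset.mem_Icc] at hm'
    rcases le_or_gt 0 (∑ r ∈ Finset.Ico m' n, ((A r : ℤ) - (S r : ℤ))) with hpos | hneg
    · have h2 : ((∑ r ∈ Finset.Ico m' (n+1), ((A r : ℤ) - (S r : ℤ))).toNat) ≤
          qg A S t₀ (n+1) := by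
        rw [qg_def]
        exact Finset.le_sup (f := fun m => (∑ r ∈ Finset.Ico m (n+1), ((A r : ℤ) - (S r : ℤ))).toNat) (Finset.mem_Icc.mpr ⟨hm'.1, by omega⟩)
      rw [sum_Ico_succ_top' hm'.2] at h2
      have hq : qg A S t₀ n = (∑ r ∈ Finset.Ico m' n, ((A r : ℤ) - (S r : ℤ))).toNat := by
        rw [qg_def, hsup]
      omega
    · have hq : qg A S t₀ n = 0 := by rw [qg_def, hsup]; omega
      have h2 : ((∑ r ∈ Finset.Ico n (n+1), ((A r : ℤ) - (S r : ℤ))).toNat) ≤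
          qg A S t₀ (n+1) := by
        rw [qg_def]
        exact Finset.le_sup (f := fun m => (∑ r ∈ Finset.Ico m (n+1), ((A r : ℤ) - (S r : ℤ))).toNat) (Finset.mem_Icc.mpr ⟨by omega, by omega⟩)
      rw [sum_Ico_succ_top' le_rfl] at h2
      simp only [Finset.Ico_self, Finset.sum_empty, zero_add] at h2
      omega

lemma qg_mono (A A' S : ℤ → ℕ) (hle : ∀ n, A n ≤ A' n) (t₀ n : ℤ) :
    qg A S t₀ n ≤ qg A' S t₀ n := by
  rw [qg_def, qg_def]
  apply Finset.sup_mono_fun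
  intro m _
  apply Int.toNat_le_toNat
  apply Finset.sum_le_sum
  intro r _
  have := hle r
  omega

lemma qX_eq (A S : ℤ → ℕ) (t₀ : ℤ) (h0 : ∀ r, r < t₀ → A r = 0) (n : ℤ) (hn : t₀ ≤ n) :
    qX A S n = (qg A S t₀ n : ℕ∞) := by
  apply le_antisymm
  · apply iSup₂_le
    intro m hm
    rcases le_or_gt t₀ m with h | h
    · apply Nat.cast_le.mpr
      rw [qg_def]
      exact Finset.le_sup (f := fun m => (∑ r ∈ Finset.Ico m n, ((A r : ℤ) - (S r : ℤ))).toNat) (Finset.mem_Icc.mpr ⟨h, hm⟩)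
    · have hsplit := sum_Ico_split' (le_of_lt h) hn (fun r => ((A r : ℤ) - (S r : ℤ)))
      have hneg : (∑ r ∈ Finset.Ico m t₀, ((A r : ℤ) - (S r : ℤ))) ≤ 0 := by
        apply Finset.sum_nonpos
        intro r hr
        simp only [Finset.mem_Ico] at hr
        rw [h0 r hr.2]
        simp
      have hmono : (∑ r ∈ Finset.Ico m n, ((A r : ℤ) - (S r : ℤ))).toNat ≤
          (∑ r ∈ Finset.Ico t₀ n, ((A r : ℤ) - (S r : ℤ))).toNat := by omega
      have h3 : (∑ r ∈ Finset.Ico t₀ n, ((A r : ℤ) - (S r : ℤ))).toNat ≤ qg A S t₀ n := by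
        rw [qg_def]
        exact Finset.le_sup (f := fun m => (∑ r ∈ Finset.Ico m n, ((A r : ℤ) - (S r : ℤ))).toNat) (Finset.mem_Icc.mpr ⟨le_rfl, hn⟩)
      exact Nat.cast_le.mpr (hmono.trans h3)
  · have hne : (Finset.Icc t₀ n).Nonempty := Finset.nonempty_Icc.mpr hn
    obtain ⟨m', hm', hsup⟩ := Finset.exists_mem_eq_sup _ hne
      (fun m => (∑ r ∈ Finset.Ico m n, ((A r : ℤ) - (S r : ℤ))).toNat)
    simp only [Finset.mem_Icc] at hm'
    rw [qg_def, hsup]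
    exact le_iSup₂_of_le m' hm'.2 le_rfl

lemma qX_zero (A S : ℤ → ℕ) (t₀ : ℤ) (h0 : ∀ r, r < t₀ → A r = 0) (n : ℤ) (hn : n < t₀) :
    qX A S n = 0 := by
  apply le_antisymm _ zero_le
  apply iSup₂_le
  intro m hm
  have hneg : (∑ r ∈ Finset.Ico m n, ((A r : ℤ) - (S r : ℤ))) ≤ 0 := by
    apply Finset.sum_nonpos
    intro r hr
    simp only [Finset.mem_Ico] at hr
    rw [h0 r (by omega)]
    simp
  have h1 : (∑ r ∈ Finset.Ico m n, ((A r : ℤ) - (S r : ℤ))).toNat = 0 := by omega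
  rw [h1]
  simp

lemma qD_zero (A S : ℤ → ℕ) (t₀ : ℤ) (h0 : ∀ r, r < t₀ → A r = 0) (n : ℤ) (hn : n < t₀) :
    qD A S n = 0 := by
  rw [qD, qX_zero A S t₀ h0 n hn, h0 n hn]
  simp

lemma qD_eq (A S : ℤ → ℕ) (t₀ : ℤ) (h0 : ∀ r, r < t₀ → A r = 0) (n : ℤ) (hn : t₀ ≤ n) :
    qD A S n = min (qg A S t₀ n + A n) (S n) := by
  rw [qD, qX_eq A S t₀ h0 n hn, ← Nat.cast_add]
  rcases le_total (qg A S t₀ n + A n) (S n) with h | h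
  · rw [min_eq_left (Nat.cast_le.mpr h), min_eq_left h]
    exact ENat.toNat_coe _
  · rw [min_eq_right (Nat.cast_le.mpr h), min_eq_right h]
    exact ENat.toNat_coe _

lemma qtelescope (A S : ℤ → ℕ) (t₀ : ℤ) (h0 : ∀ r, r < t₀ → A r = 0) :
    ∀ t, t₀ ≤ t →
      (∑ r ∈ Finset.Ico t₀ t, qD A S r) + qg A S t₀ t = ∑ r ∈ Finset.Ico t₀ t, A r := by
  refine fun t => Int.le_induction (motive := fun t _ => (∑ r ∈ Finset.Ico t₀ t, qD A S r) + qg A S t₀ t = ∑ r ∈ Finset.Ico t₀ t, A r) ?_ ?_ t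
  · simp [qg_t0]
  · intro t ht ih
    rw [sum_Ico_succ_top' ht, sum_Ico_succ_top' ht, qg_succ A S t₀ t ht,
      qD_eq A S t₀ h0 t ht]
    omega

lemma qkey (A A' S : ℤ → ℕ) (hle : ∀ n, A n ≤ A' n) (t₀ m : ℤ) (hm : t₀ ≤ m) :
    ∀ t, m ≤ t →
      qg A' S t₀ t + ((∑ r ∈ Finset.Ico m t, A r) + qg A S t₀ m) ≤
      qg A S t₀ t + ((∑ r ∈ Finset.Ico m t, A' r) + qg A' S t₀ m) := by
  refine fun t => Int.le_induction (motive := fun t _ => qg A' S t₀ t + ((∑ r ∈ Finset.Ico m t, A r) + qg A S t₀ m) ≤ qg A S t₀ t + ((∑ r ∈ Finset.Ico m t, A' r) + qg A' S t₀ m)) ?_ ?_ t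
  · simp [Nat.add_comm]
  · intro t ht ih
    have htt : t₀ ≤ t := le_trans hm ht
    have hsum : (∑ r ∈ Finset.Ico m t, A r) ≤ ∑ r ∈ Finset.Ico m t, A' r :=
      Finset.sum_le_sum fun r _ => hle r
    have hgm : qg A S t₀ m ≤ qg A' S t₀ m := qg_mono A A' S hle t₀ m
    have hAt := hle t
    rw [sum_Ico_succ_top' ht, sum_Ico_succ_top' ht, qg_succ A S t₀ t htt,
      qg_succ A' S t₀ t htt]
    omega

/-- Monotonicity of departures in arrivals: if `A ≤ A'` pointwise and both vanish
before some common time, then cumulative departures for `A` are dominated by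
those for `A'`, over any window `{m,…,n}`. -/
theorem departures_monotone_in_arrivals (A A' S : ℤ → ℕ)
    (h0 : ∃ t₀ : ℤ, ∀ n : ℤ, n < t₀ → A n = 0 ∧ A' n = 0)
    (hle : ∀ n : ℤ, A n ≤ A' n) :
    ∀ m n : ℤ, m ≤ n →
      ∑ r ∈ Finset.Icc m n, qD A S r ≤ ∑ r ∈ Finset.Icc m n, qD A' S r := by
  obtain ⟨t₀, ht₀⟩ := h0
  have h0A : ∀ r, r < t₀ → A r = 0 := fun r hr => (ht₀ r hr).1
  have h0A' : ∀ r, r < t₀ → A' r = 0 := fun r hr => (ht₀ r hr).2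
  intro m n hmn
  set m' := max m t₀ with hm'
  have hIcc : Finset.Icc m n = Finset.Ico m (n+1) := by
    ext x; simp only [Finset.mem_Icc, Finset.mem_Ico]; omega
  rcases lt_or_ge n m' with hcase | hcase
  · -- whole window is before t₀; both sums vanish
    have hz : ∀ B : ℤ → ℕ, (∀ r, r < t₀ → B r = 0) →
        ∑ r ∈ Finset.Icc m n, qD B S r = 0 := by
      intro B hB
      apply Finset.sum_eq_zero
      intro r hr
      simp only [Finset.mem_Icc] at hr
      exact qD_zero B S t₀ hB r (by omega)
    rw [hz A h0A, hz A' h0A']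
  · have hmm' : m ≤ m' := le_max_left _ _
    have ht₀m' : t₀ ≤ m' := le_max_right _ _
    have hm'n1 : m' ≤ n + 1 := by omega
    have hzero : ∀ B : ℤ → ℕ, (∀ r, r < t₀ → B r = 0) →
        ∑ r ∈ Finset.Ico m m', qD B S r = 0 := by
      intro B hB
      apply Finset.sum_eq_zero
      intro r hr
      simp only [Finset.mem_Ico] at hr
      exact qD_zero B S t₀ hB r (by omega)
    rw [hIcc, sum_Ico_split' hmm' hm'n1 (qD A S), sum_Ico_split' hmm' hm'n1 (qD A' S),
      hzero A h0A, hzero A' h0A', zero_add, zero_add]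
    -- now the main window [m', n+1) with t₀ ≤ m' ≤ n+1
    have hT1 := qtelescope A S t₀ h0A m' ht₀m'
    have hT2 := qtelescope A S t₀ h0A (n+1) (by omega)
    have hT1' := qtelescope A' S t₀ h0A' m' ht₀m'
    have hT2' := qtelescope A' S t₀ h0A' (n+1) (by omega)
    have hsD := sum_Ico_split' ht₀m' hm'n1 (qD A S)
    have hsD' := sum_Ico_split' ht₀m' hm'n1 (qD A' S)
    have hsA := sum_Ico_split' ht₀m' hm'n1 A
    have hsA' := sum_Ico_split' ht₀m' hm'n1 A'
    have hk := qkey A A' S hle t₀ m' ht₀m' (n+1) hm'n1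
    omega
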